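/- The minimum sum-rank distance of the s-interleaved linearized Reed–Solomon code equals n − k + 1; that is, the minimum of wt_ΣR(M·λ_k(β)_a⃗) over all nonzero M ∈ F^(s×k) is exactly n − k + 1. -/

import Mathlib

namespace Stmt2

/-- `genNorm σ a i = σ^(i-1)(a) ⋯ σ(a) · a`, the generalized power function `N_i(a)`. -/
def genNorm {F : Type} [Field F] (σ : F ≃+* F) (a : F) : ℕ → F
  | 0 => 1
  | i + 1 => (⇑σ)^[i] a * genNorm σ a i

/-- Generalized operator `D_a^i(b) = σ^i(b) · N_i(a)` for `i ∈ ℕ`. -/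
def opev {F : Type} [Field F] (σ : F ≃+* F) (a b : F) (i : ℕ) : F :=
  (⇑σ)^[i] b * genNorm σ a i

/-- `b` is σ-conjugate to `a`, i.e. `b = σ(c)·a·c⁻¹` for some nonzero `c`. -/
def SConj {F : Type} [Field F] (σ : F ≃+* F) (a b : F) : Prop :=
  ∃ c : F, c ≠ 0 ∧ b = σ c * a * c⁻¹

/-- σ-generalized Moore matrix `λ_d(x)_a⃗` w.r.t. the length partition `nn`:
its row `r` applies `D_{a_i}^r` entrywise to the `i`-th block of `x`. -/
def moore {F : Type} [Field F] (σ : F ≃+* F) {ℓ : ℕ} (nn : Fin ℓ → ℕ) (aa : Fin ℓ → F)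
    (d : ℕ) (x : (Σ i : Fin ℓ, Fin (nn i)) → F) :
    Matrix (Fin d) (Σ i : Fin ℓ, Fin (nn i)) F :=
  Matrix.of fun r p => opev σ (aa p.1) (x p) (r : ℕ)

/-- `λ_d(X)_a⃗` for a matrix `X`: the stack of `λ_d(x_j)_a⃗` over the rows of `X`. -/
def mooreMat {F : Type} [Field F] (σ : F ≃+* F) {ℓ : ℕ} (nn : Fin ℓ → ℕ) (aa : Fin ℓ → F)
    {s : ℕ} (d : ℕ) (X : Matrix (Fin s) (Σ i : Fin ℓ, Fin (nn i)) F) :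
    Matrix (Fin s × Fin d) (Σ i : Fin ℓ, Fin (nn i)) F :=
  Matrix.of fun r p => opev σ (aa p.1) (X r.1 p) (r.2 : ℕ)

/-- `rk_q` of a vector: the `K`-dimension of the `K`-span of its entries. -/
noncomputable def rkq (K : Type) [Field K] {F : Type} [Field F] [Algebra K F] {ι : Type}
    (v : ι → F) : ℕ :=
  Module.finrank K (Submodule.span K (Set.range v))

/-- `rk_q` of a matrix: the `K`-dimension of the `K`-span of its columns. -/
noncomputable def rkqMat (K : Type) [Field K] {F : Type} [Field F] [Algebra K F]
    {s : ℕ} {ι : Type} (X : Matrix (Fin s) ι F) : ℕ :=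
  Module.finrank K (Submodule.span K (Set.range fun j : ι => fun r : Fin s => X r j))

/-- Sum-rank weight of a blockwise vector. -/
noncomputable def wtV (K : Type) [Field K] {F : Type} [Field F] [Algebra K F] {ℓ : ℕ}
    (nn : Fin ℓ → ℕ) (x : (Σ i : Fin ℓ, Fin (nn i)) → F) : ℕ :=
  ∑ i, rkq K fun μ : Fin (nn i) => x ⟨i, μ⟩

/-- Sum-rank weight of a blockwise matrix. -/
noncomputable def wtM (K : Type) [Field K] {F : Type} [Field F] [Algebra K F] {s ℓ : ℕ}
    (nn : Fin ℓ → ℕ) (X : Matrix (Fin s) (Σ i : Fin ℓ, Fin (nn i)) F) : ℕ :=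
  ∑ i, rkqMat K (Matrix.of fun (r : Fin s) (μ : Fin (nn i)) => X r ⟨i, μ⟩)

/-- Codeword `C(M) = M · λ_k(β)_a⃗` of the `s`-interleaved linearized Reed–Solomon code. -/
def codeword {F : Type} [Field F] (σ : F ≃+* F) {ℓ : ℕ} (nn : Fin ℓ → ℕ) (aa : Fin ℓ → F)
    (β : (Σ i : Fin ℓ, Fin (nn i)) → F) {s : ℕ} (k : ℕ) (M : Matrix (Fin s) (Fin k) F) :
    Matrix (Fin s) (Σ i : Fin ℓ, Fin (nn i)) F :=
  M * moore σ nn aa k β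

/-! ### Auxiliary development -/

/-- descending-recursion coefficients of the (skew) quotient by `(x - c)` -/
def gA {F : Type} [Field F] (σ : F ≃+* F) (m : ℕ → F) (c : F) (k : ℕ) : ℕ → F
  | 0 => 0
  | d + 1 => m (k - d) + gA σ m c k d * (⇑σ)^[k - d] c

section Identities

variable {F : Type} [Field F] (σ : F ≃+* F)

lemma gA_rec (m : ℕ → F) (c : F) {k j : ℕ} (hj : j < k) :
    gA σ m c k (k - j) = m (j + 1) + gA σ m c k (k - (j + 1)) * (⇑σ)^[j + 1] c := by
  have h1 : k - j = (k - (j + 1)) + 1 := by omega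
  rw [h1, gA]
  have h2 : k - (k - (j + 1)) = j + 1 := by omega
  rw [h2]

lemma Qlem (m : ℕ → F) (c a β : F) (k : ℕ) :
    ∀ n < k,
      ∑ j ∈ Finset.range (n + 1), gA σ m c k (k - j) * opev σ a (σ β * a - c * β) j
          + (m 0 + gA σ m c k k * c) * β
        = gA σ m c k (k - n) * ((⇑σ)^[n + 1] β * genNorm σ a (n + 1))
          + ∑ j ∈ Finset.range (n + 1), m j * opev σ a β j := by
  intro n
  induction n with
  | zero =>
    intro _
    rw [Finset.sum_range_one, Finset.sum_range_one]
    simp only [opev, genNorm, Function.iterate_zero, id_eq, Function.iterate_one, Nat.sub_zero,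
      mul_one]
    rw [Function.iterate_one]
    ring
  | succ n ih =>
    intro hn
    have hn' : n < k := by omega
    rw [Finset.sum_range_succ (fun j => gA σ m c k (k - j) * opev σ a (σ β * a - c * β) j),
      add_right_comm, ih hn']
    conv_rhs => rw [Finset.sum_range_succ]
    have hg := gA_rec σ m c hn'
    have hit : (⇑σ)^[n + 1] (σ β * a - c * β)
        = (⇑σ)^[n + 1 + 1] β * (⇑σ)^[n + 1] a - (⇑σ)^[n + 1] c * (⇑σ)^[n + 1] β := by
      rw [iterate_map_sub, iterate_map_mul, iterate_map_mul,
        ← Function.iterate_succ_apply (⇑σ) (n + 1) β]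
    have hN : genNorm σ a (n + 1 + 1) = (⇑σ)^[n + 1] a * genNorm σ a (n + 1) := rfl
    simp only [opev]
    rw [hit, hN, hg]
    ring

lemma key_id (m : ℕ → F) (c a β : F) {k : ℕ} (hk : 1 ≤ k) :
    ∑ j ∈ Finset.range k, gA σ m c k (k - j) * opev σ a (σ β * a - c * β) j
        + (m 0 + gA σ m c k k * c) * β
      = ∑ j ∈ Finset.range (k + 1), m j * opev σ a β j := by
  have h := Qlem σ m c a β k (k - 1) (by omega)
  have h1 : k - 1 + 1 = k := by omega
  rw [h1] at h
  have h2 : gA σ m c k (k - (k - 1)) = m k := by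
    have h3 := gA_rec σ m c (show k - 1 < k by omega)
    have e3 : k - k = 0 := Nat.sub_self k
    rw [h1, e3] at h3
    simpa [gA] using h3
  rw [h2] at h
  rw [Finset.sum_range_succ, h, opev]
  ring

end Identities

section Helpers

variable {K F : Type} [Field K] [Field F] [Algebra K F]
variable (σ : F ≃+* F)

lemma iterate_fix (hσ : ∀ x : K, σ (algebraMap K F x) = algebraMap K F x)
    (j : ℕ) (c : K) (x : F) :
    (⇑σ)^[j] (algebraMap K F c * x) = algebraMap K F c * (⇑σ)^[j] x := by
  induction j generalizing x with
  | zero => simp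
  | succ n ih =>
    rw [Function.iterate_succ_apply, map_mul, hσ, ih, Function.iterate_succ_apply]

variable (K) in
/-- the `K`-linear evaluation map `b ↦ ∑_{j<k} m j · D_a^j(b)` -/
def evalL (hσ : ∀ x : K, σ (algebraMap K F x) = algebraMap K F x)
    (m : ℕ → F) (k : ℕ) (a : F) : F →ₗ[K] F where
  toFun b := ∑ j ∈ Finset.range k, m j * opev σ a b j
  map_add' x y := by
    rw [← Finset.sum_add_distrib]
    refine Finset.sum_congr rfl fun j _ => ?_
    simp only [opev, iterate_map_add]
    ring
  map_smul' c x := by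
    simp only [Algebra.smul_def, RingHom.id_apply, Finset.mul_sum]
    refine Finset.sum_congr rfl fun j _ => ?_
    simp only [opev, iterate_fix σ hσ j c x]
    ring

variable (K) in
/-- the `K`-linear map `b ↦ σ(b)·a − c·b` -/
def conjL (hσ : ∀ x : K, σ (algebraMap K F x) = algebraMap K F x)
    (a c : F) : F →ₗ[K] F where
  toFun b := σ b * a - c * b
  map_add' x y := by rw [map_add]; ring
  map_smul' d x := by
    simp only [Algebra.smul_def, RingHom.id_apply, map_mul, hσ]
    ring

lemma finrank_map_add_inf_ker {V W : Type} [AddCommGroup V] [Module K V]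
    [AddCommGroup W] [Module K W] [FiniteDimensional K V]
    (φ : V →ₗ[K] W) (U : Submodule K V) :
    Module.finrank K (U.map φ) + Module.finrank K ↥(LinearMap.ker φ ⊓ U)
      = Module.finrank K U := by
  have h1 := LinearMap.finrank_range_add_finrank_ker (φ.comp U.subtype)
  rw [LinearMap.range_comp, Submodule.range_subtype] at h1
  have h2 : LinearMap.ker (φ.comp U.subtype)
      = Submodule.comap U.subtype (LinearMap.ker φ ⊓ U) := by
    ext x
    simp [LinearMap.mem_ker, x.2]
  rw [h2, LinearEquiv.finrank_eq (Submodule.comapSubtypeEquivOfLe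
    (inf_le_right : LinearMap.ker φ ⊓ U ≤ U))] at h1
  exact h1

lemma finrank_map_le' {V W : Type} [AddCommGroup V] [Module K V]
    [AddCommGroup W] [Module K W] [FiniteDimensional K V]
    (φ : V →ₗ[K] W) (U : Submodule K V) :
    Module.finrank K (U.map φ) ≤ Module.finrank K U := by
  have := finrank_map_add_inf_ker φ U
  omega

lemma finrank_map_inj {V W : Type} [AddCommGroup V] [Module K V]
    [AddCommGroup W] [Module K W] [FiniteDimensional K V]
    (φ : V →ₗ[K] W) (hφ : LinearMap.ker φ = ⊥) (U : Submodule K V) :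
    Module.finrank K (U.map φ) = Module.finrank K U := by
  have h := finrank_map_add_inf_ker φ U
  rw [hφ, bot_inf_eq, finrank_bot] at h
  omega

lemma rkq_comp_lin (φ : F →ₗ[K] F) {ι : Type} (v : ι → F) :
    rkq K (fun x => φ (v x))
      = Module.finrank K ((Submodule.span K (Set.range v)).map φ) := by
  rw [rkq, Submodule.map_span]
  rw [show (Set.range fun x => φ (v x)) = ⇑φ '' Set.range v from
    (Set.range_comp ⇑φ v)]

lemma rkq_row_le [FiniteDimensional K F] {s : ℕ} {ι : Type}
    (X : Matrix (Fin s) ι F) (r₀ : Fin s) :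
    rkq K (fun j => X r₀ j) ≤ rkqMat K X := by
  rw [rkq, rkqMat]
  have hr : Set.range (fun j : ι => X r₀ j)
      = ⇑(LinearMap.proj (R := K) (φ := fun _ : Fin s => F) r₀)
        '' (Set.range fun j : ι => fun r : Fin s => X r j) := by
    rw [← Set.range_comp]; rfl
  rw [hr, ← Submodule.map_span]
  exact finrank_map_le' _ _

lemma rkq_single_row [FiniteDimensional K F] {s : ℕ} {ι : Type} (y : ι → F) (r₀ : Fin s) :
    rkqMat K (Matrix.of fun (r : Fin s) (j : ι) => if r = r₀ then y j else 0)
      = rkq K y := by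
  rw [rkq, rkqMat]
  have hfun : (fun j : ι => fun r : Fin s =>
        (Matrix.of fun (r : Fin s) (j : ι) => if r = r₀ then y j else 0) r j)
      = ⇑(LinearMap.single K (fun _ : Fin s => F) r₀) ∘ y := by
    funext j r
    simp [LinearMap.coe_single, Pi.single_apply]
  rw [hfun, Set.range_comp, ← Submodule.map_span]
  refine finrank_map_inj _ ?_ _
  rw [LinearMap.ker_eq_bot]
  intro x y' hxy
  have := congrFun hxy r₀
  simpa [LinearMap.coe_single] using this

end Helpers

section Core

variable {K F : Type} [Field K] [Field F] [Algebra K F]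
variable (σ : F ≃+* F)
variable {ℓ : ℕ} (aa : Fin ℓ → F)

lemma coreA [FiniteDimensional K F]
    (hfix : ∀ x : F, σ x = x ↔ x ∈ Set.range (algebraMap K F))
    (ha0 : ∀ i, aa i ≠ 0)
    (haconj : ∀ i j : Fin ℓ, i ≠ j → ¬ SConj σ (aa i) (aa j)) :
    ∀ (k : ℕ) (m : ℕ → F) (U : Fin ℓ → Submodule K F),
      (∀ i, ∀ β ∈ U i, ∑ j ∈ Finset.range k, m j * opev σ (aa i) β j = 0) →
      (k ≤ ∑ i, Module.finrank K ↥(U i)) → ∀ j < k, m j = 0 := by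
  have hσ : ∀ x : K, σ (algebraMap K F x) = algebraMap K F x :=
    fun x => (hfix _).mpr ⟨x, rfl⟩
  intro k
  induction k with
  | zero => intro m U _ _ j hj; omega
  | succ k ih =>
    intro m U hvan hdim j hj
    have hex : ∃ t, U t ≠ ⊥ := by
      by_contra h
      push_neg at h
      have hz : ∑ i, Module.finrank K ↥(U i) = 0 :=
        Finset.sum_eq_zero fun i _ => by rw [h i]; exact finrank_bot K F
      omega
    obtain ⟨t, ht⟩ := hex
    obtain ⟨b, hbU, hb0⟩ := (Submodule.ne_bot_iff _).mp ht
    rcases Nat.eq_zero_or_pos k with hk0 | hk1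
    · subst hk0
      have h0 := hvan t b hbU
      rw [Finset.sum_range_one] at h0
      have hj0 : j = 0 := by omega
      subst hj0
      have hmb : m 0 * b = 0 := by simpa [opev, genNorm] using h0
      rcases mul_eq_zero.mp hmb with h | h
      · exact h
      · exact absurd h hb0
    · set c : F := σ b * aa t * b⁻¹ with hc
      have hbne : σ b ≠ 0 := by
        simpa using (map_ne_zero σ).mpr hb0
      have hcb : c * b = σ b * aa t := by
        rw [hc]; field_simp
      have hφb : σ b * aa t - c * b = 0 := by rw [hcb, sub_self]
      have hfc : m 0 + gA σ m c k k * c = 0 := by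
        have hkey := key_id σ m c (aa t) b hk1
        have hz : ∀ x ∈ Finset.range k,
            gA σ m c k (k - x) * opev σ (aa t) (σ b * aa t - c * b) x = 0 := by
          intro x _
          rw [hφb]
          simp [opev, iterate_map_zero]
        rw [Finset.sum_eq_zero hz, zero_add, hvan t b hbU] at hkey
        rcases mul_eq_zero.mp hkey with h | h
        · exact h
        · exact absurd h hb0
      set U' : Fin ℓ → Submodule K F :=
        fun i => (U i).map (conjL K σ hσ (aa i) c) with hU'
      have hvan' : ∀ i, ∀ β' ∈ U' i,
          ∑ j ∈ Finset.range k, gA σ m c k (k - j) * opev σ (aa i) β' j = 0 := by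
        rintro i β' ⟨β, hβU, rfl⟩
        have hkey := key_id σ m c (aa i) β hk1
        rw [hvan i β hβU, hfc, zero_mul] at hkey
        have hcl : conjL K σ hσ (aa i) c β = σ β * aa i - c * β := rfl
        rw [hcl]
        rw [add_zero] at hkey
        exact hkey
      have hker_t : LinearMap.ker (conjL K σ hσ (aa t) c) ≤ Submodule.span K {b} := by
        intro x hx
        rcases eq_or_ne x 0 with rfl | hx0
        · exact Submodule.zero_mem _
        have hx' : σ x * aa t = c * x := by
          have h2 : σ x * aa t - c * x = 0 := LinearMap.mem_ker.mp hx
          linear_combination h2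
        have h4 : (σ x * b) * aa t = (x * σ b) * aa t := by
          calc (σ x * b) * aa t = (σ x * aa t) * b := by ring
            _ = c * x * b := by rw [hx']
            _ = x * (c * b) := by ring
            _ = x * (σ b * aa t) := by rw [hcb]
            _ = (x * σ b) * aa t := by ring
        have h3 := mul_right_cancel₀ (ha0 t) h4
        have h5 : σ (x * b⁻¹) = x * b⁻¹ := by
          rw [map_mul, map_inv₀]
          field_simp
          linear_combination h3
        obtain ⟨u, hu⟩ := (hfix _).mp h5
        rw [Submodule.mem_span_singleton]
        refine ⟨u, ?_⟩
        rw [Algebra.smul_def, hu]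
        field_simp
      have hker_i : ∀ i, i ≠ t → LinearMap.ker (conjL K σ hσ (aa i) c) = ⊥ := by
        intro i hit
        rw [Submodule.eq_bot_iff]
        intro x hx
        by_contra hx0
        have hx' : σ x * aa i = c * x := by
          have h2 : σ x * aa i - c * x = 0 := LinearMap.mem_ker.mp hx
          linear_combination h2
        refine haconj i t hit ⟨x * b⁻¹, mul_ne_zero hx0 (inv_ne_zero hb0), ?_⟩
        have key : aa t * (σ b * x) = (σ x * aa i) * b := by
          rw [hx']
          linear_combination (-x) * hcb
        rw [map_mul, map_inv₀, mul_inv, inv_inv]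
        field_simp
        linear_combination key
      have hle : ∀ i, Module.finrank K ↥(U i)
          ≤ Module.finrank K ↥(U' i) + (if i = t then 1 else 0) := by
        intro i
        have heq := finrank_map_add_inf_ker (conjL K σ hσ (aa i) c) (U i)
        by_cases hit : i = t
        · subst hit
          have hun : Module.finrank K ↥(LinearMap.ker (conjL K σ hσ (aa i) c) ⊓ U i) ≤ 1 := by
            have h1 : (LinearMap.ker (conjL K σ hσ (aa i) c) ⊓ U i) ≤ Submodule.span K {b} :=
              le_trans inf_le_left hker_t
            calc Module.finrank K ↥(LinearMap.ker (conjL K σ hσ (aa i) c) ⊓ U i)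
                ≤ Module.finrank K ↥(Submodule.span K {b}) := Submodule.finrank_mono h1
              _ = 1 := finrank_span_singleton hb0
          rw [if_pos rfl]
          have heq' : Module.finrank K ↥(U' i)
              + Module.finrank K ↥(LinearMap.ker (conjL K σ hσ (aa i) c) ⊓ U i)
              = Module.finrank K ↥(U i) := heq
          omega
        · rw [hker_i i hit, bot_inf_eq, finrank_bot] at heq
          have heq' : Module.finrank K ↥(U' i) + 0 = Module.finrank K ↥(U i) := heq
          rw [if_neg hit]
          omega
      have hsum2 : k + 1 ≤ ∑ i, (Module.finrank K ↥(U' i) + if i = t then 1 else 0) :=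
        le_trans hdim (Finset.sum_le_sum fun i _ => hle i)
      rw [Finset.sum_add_distrib] at hsum2
      have hone : (∑ i, if i = t then 1 else 0) = 1 := by
        rw [Finset.sum_ite_eq' Finset.univ t (fun _ => 1)]
        simp
      rw [hone] at hsum2
      have hdim' : k ≤ ∑ i, Module.finrank K ↥(U' i) := by omega
      have hg0 : ∀ j' < k, gA σ m c k (k - j') = 0 :=
        ih (fun j' => gA σ m c k (k - j')) U' hvan' hdim'
      have hgall : ∀ j', gA σ m c k (k - j') = 0 := by
        intro j'
        rcases lt_or_ge j' k with h | h
        · exact hg0 j' h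
        · rw [Nat.sub_eq_zero_of_le h]; rfl
      rcases Nat.eq_zero_or_pos j with rfl | hjpos
      · have hg00 : gA σ m c k k = 0 := by
          have h := hgall 0
          rwa [Nat.sub_zero] at h
        rw [hg00, zero_mul, add_zero] at hfc
        exact hfc
      · obtain ⟨j', rfl⟩ : ∃ j'', j = j'' + 1 := ⟨j - 1, by omega⟩
        have hj'k : j' < k := by omega
        have hrec := gA_rec σ m c hj'k
        rw [hgall j', hgall (j' + 1), zero_mul] at hrec
        linear_combination -hrec

end Core

section Aux2

variable {K F : Type} [Field K] [Field F] [Algebra K F]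
variable (σ : F ≃+* F)

lemma evalL_fin (hσ : ∀ x : K, σ (algebraMap K F x) = algebraMap K F x)
    {k : ℕ} (mm : Fin k → F) (a b : F) :
    evalL K σ hσ (fun j => if h : j < k then mm ⟨j, h⟩ else 0) k a b
      = ∑ j : Fin k, mm j * opev σ a b ↑j := by
  show (∑ j ∈ Finset.range k, (if h : j < k then mm ⟨j, h⟩ else 0) * opev σ a b j) = _
  rw [← Fin.sum_univ_eq_sum_range
    (fun j => (if h : j < k then mm ⟨j, h⟩ else 0) * opev σ a b j) k]
  exact Finset.sum_congr rfl fun j _ => by rw [dif_pos j.isLt, Fin.eta]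

lemma sigma_eta {ℓ : ℕ} {nn : Fin ℓ → ℕ} (p : Σ i : Fin ℓ, Fin (nn i)) (i : Fin ℓ)
    (h : p.1 = i) (hlt : (p.2 : ℕ) < nn i) :
    (⟨i, ⟨(p.2 : ℕ), hlt⟩⟩ : Σ i : Fin ℓ, Fin (nn i)) = p := by
  cases p with
  | mk p1 p2 =>
    subst h
    rw [Fin.eta]

end Aux2

/-- Minimum sum-rank distance of ILRS codes.
The minimum of `wt_ΣR(M · λ_k(β)_a⃗)` over all nonzero `M ∈ F^{s×k}` is exactly
`n − k + 1`. -/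
theorem ILRS_minimum_sum_rank_distance
    {K F : Type} [Field K] [Field F] [Algebra K F] [Fintype K] [Fintype F]
    (σ : F ≃+* F)
    (hfix : ∀ x : F, σ x = x ↔ x ∈ Set.range (algebraMap K F))
    {ℓ : ℕ} (hℓ : 1 ≤ ℓ) (nn : Fin ℓ → ℕ) (aa : Fin ℓ → F)
    (ha0 : ∀ i, aa i ≠ 0)
    (haconj : ∀ i j : Fin ℓ, i ≠ j → ¬ SConj σ (aa i) (aa j))
    (β : (Σ i : Fin ℓ, Fin (nn i)) → F)
    (hβ : ∀ i, LinearIndependent K fun μ : Fin (nn i) => β ⟨i, μ⟩)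
    {s : ℕ} (hs : 1 ≤ s) {k n : ℕ} (hn : n = ∑ i, nn i)
    (hk : 1 ≤ k) (hkn : k ≤ n) :
    (∀ M : Matrix (Fin s) (Fin k) F, M ≠ 0 →
        n - k + 1 ≤ wtM K nn (codeword σ nn aa β k M)) ∧
      ∃ M : Matrix (Fin s) (Fin k) F, M ≠ 0 ∧
        wtM K nn (codeword σ nn aa β k M) = n - k + 1 := by
  classical
  haveI : FiniteDimensional K F := Module.Finite.of_finite
  have hσ : ∀ x : K, σ (algebraMap K F x) = algebraMap K F x :=
    fun x => (hfix _).mpr ⟨x, rfl⟩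
  -- the kernel-dimension upper bound coming from `coreA`
  have key1 : ∀ mext : ℕ → F, (∃ j, ∃ _ : j < k, mext j ≠ 0) →
      (∑ i, Module.finrank K ↥(LinearMap.ker (evalL K σ hσ mext k (aa i))
        ⊓ Submodule.span K (Set.range fun μ : Fin (nn i) => β ⟨i, μ⟩))) < k := by
    rintro mext ⟨j0, hj0, hne⟩
    by_contra hge
    push_neg at hge
    refine hne (coreA σ aa hfix ha0 haconj k mext
      (fun i => LinearMap.ker (evalL K σ hσ mext k (aa i))
        ⊓ Submodule.span K (Set.range fun μ : Fin (nn i) => β ⟨i, μ⟩)) ?_ hge j0 hj0)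
    intro i β' hβ'
    exact (Submodule.mem_inf.mp hβ').1
  -- per-block rank-nullity
  have key2 : ∀ (mext : ℕ → F) (i : Fin ℓ),
      rkq K (fun μ : Fin (nn i) => evalL K σ hσ mext k (aa i) (β ⟨i, μ⟩))
        + Module.finrank K ↥(LinearMap.ker (evalL K σ hσ mext k (aa i))
            ⊓ Submodule.span K (Set.range fun μ : Fin (nn i) => β ⟨i, μ⟩)) = nn i := by
    intro mext i
    rw [rkq_comp_lin, finrank_map_add_inf_ker, finrank_span_eq_card (hβ i),
      Fintype.card_fin]
  constructor
  · -- lower bound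
    intro M hM
    obtain ⟨r₀, j₀, hMr⟩ : ∃ r j, M r j ≠ 0 := by
      by_contra h
      push_neg at h
      exact hM (Matrix.ext fun r j => h r j)
    set mext : ℕ → F := fun j => if h : j < k then M r₀ ⟨j, h⟩ else 0 with hmext
    have hcwrow : ∀ p, codeword σ nn aa β k M r₀ p
        = evalL K σ hσ mext k (aa p.1) (β p) := by
      intro p
      show (M * moore σ nn aa k β) r₀ p = _
      rw [Matrix.mul_apply, evalL_fin σ hσ (fun j => M r₀ j) (aa p.1) (β p)]
      rfl
    have h1 : ∀ i, rkq K (fun μ : Fin (nn i) => evalL K σ hσ mext k (aa i) (β ⟨i, μ⟩))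
        ≤ rkqMat K (Matrix.of fun (r : Fin s) (μ : Fin (nn i)) =>
            codeword σ nn aa β k M r ⟨i, μ⟩) := by
      intro i
      have h2 := rkq_row_le (K := K)
        (Matrix.of fun (r : Fin s) (μ : Fin (nn i)) => codeword σ nn aa β k M r ⟨i, μ⟩) r₀
      have h3 : (fun μ : Fin (nn i) =>
            (Matrix.of fun (r : Fin s) (μ : Fin (nn i)) =>
              codeword σ nn aa β k M r ⟨i, μ⟩) r₀ μ)
          = fun μ : Fin (nn i) => evalL K σ hσ mext k (aa i) (β ⟨i, μ⟩) :=
        funext fun μ => hcwrow ⟨i, μ⟩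
      rwa [h3] at h2
    have hwt : (∑ i, rkq K (fun μ : Fin (nn i) => evalL K σ hσ mext k (aa i) (β ⟨i, μ⟩)))
        ≤ wtM K nn (codeword σ nn aa β k M) := by
      rw [wtM]
      exact Finset.sum_le_sum fun i _ => h1 i
    have hK1 := key1 mext ⟨(j₀ : ℕ), j₀.isLt, by
      rw [hmext]
      simp only [dif_pos j₀.isLt, Fin.eta]
      exact hMr⟩
    have hTot : (∑ i, rkq K (fun μ : Fin (nn i) => evalL K σ hσ mext k (aa i) (β ⟨i, μ⟩)))
        + (∑ i, Module.finrank K ↥(LinearMap.ker (evalL K σ hσ mext k (aa i))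
            ⊓ Submodule.span K (Set.range fun μ : Fin (nn i) => β ⟨i, μ⟩))) = n := by
      rw [← Finset.sum_add_distrib, hn]
      exact Finset.sum_congr rfl fun i _ => key2 mext i
    omega
  · -- existence of a minimum-weight codeword
    have hcard : Fintype.card (Σ i : Fin ℓ, Fin (nn i)) = n := by
      rw [Fintype.card_sigma]
      simp [hn]
    obtain ⟨e⟩ : Nonempty (Fin (k - 1) ↪ (Σ i : Fin ℓ, Fin (nn i))) := by
      apply Function.Embedding.nonempty_of_card_le
      rw [Fintype.card_fin, hcard]
      omega
    let Φ : (Fin k → F) →ₗ[F] (Fin (k - 1) → F) :=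
      { toFun := fun mm => fun r => ∑ j : Fin k, mm j * opev σ (aa (e r).1) (β (e r)) ↑j
        map_add' := by
          intro x y
          funext r
          simp [add_mul, Finset.sum_add_distrib]
        map_smul' := by
          intro d x
          funext r
          simp [Finset.mul_sum, mul_assoc] }
    have hker : LinearMap.ker Φ ≠ ⊥ := by
      apply LinearMap.ker_ne_bot_of_finrank_lt
      rw [Module.finrank_fin_fun, Module.finrank_fin_fun]
      omega
    obtain ⟨m0, hm0mem, hm0⟩ := (Submodule.ne_bot_iff _).mp hker
    have hΦ0 : Φ m0 = 0 := LinearMap.mem_ker.mp hm0mem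
    obtain ⟨j₁, hj₁⟩ : ∃ j, m0 j ≠ 0 := by
      by_contra h
      push_neg at h
      exact hm0 (funext h)
    set r₀ : Fin s := ⟨0, hs⟩ with hr₀
    refine ⟨Matrix.of fun (r : Fin s) (j : Fin k) => if r = r₀ then m0 j else 0, ?_, ?_⟩
    · intro h
      have h2 := congrFun (congrFun h r₀) j₁
      simp only [Matrix.of_apply, if_pos rfl, Matrix.zero_apply] at h2
      exact hj₁ h2
    · set mext : ℕ → F := fun j => if h : j < k then m0 ⟨j, h⟩ else 0 with hmext
      have hcw : ∀ (r : Fin s) p,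
          codeword σ nn aa β k (Matrix.of fun (r : Fin s) (j : Fin k) =>
            if r = r₀ then m0 j else 0) r p
          = if r = r₀ then evalL K σ hσ mext k (aa p.1) (β p) else 0 := by
        intro r p
        show ((Matrix.of fun (r : Fin s) (j : Fin k) => if r = r₀ then m0 j else 0)
            * moore σ nn aa k β) r p = _
        rw [Matrix.mul_apply]
        by_cases hr : r = r₀
        · rw [if_pos hr, evalL_fin σ hσ m0 (aa p.1) (β p)]
          refine Finset.sum_congr rfl fun j _ => ?_
          rw [Matrix.of_apply, if_pos hr]
          rfl
        · rw [if_neg hr]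
          refine Finset.sum_eq_zero fun j _ => ?_
          rw [Matrix.of_apply, if_neg hr, zero_mul]
      have hwt : wtM K nn (codeword σ nn aa β k (Matrix.of fun (r : Fin s) (j : Fin k) =>
            if r = r₀ then m0 j else 0))
          = ∑ i, rkq K (fun μ : Fin (nn i) => evalL K σ hσ mext k (aa i) (β ⟨i, μ⟩)) := by
        rw [wtM]
        refine Finset.sum_congr rfl fun i _ => ?_
        have hbm : (Matrix.of fun (r : Fin s) (μ : Fin (nn i)) =>
              codeword σ nn aa β k (Matrix.of fun (r : Fin s) (j : Fin k) =>
                if r = r₀ then m0 j else 0) r ⟨i, μ⟩)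
            = Matrix.of fun (r : Fin s) (μ : Fin (nn i)) =>
                if r = r₀ then evalL K σ hσ mext k (aa i) (β ⟨i, μ⟩) else 0 := by
          funext r μ
          exact hcw r ⟨i, μ⟩
        rw [hbm, rkq_single_row]
      have hK1 := key1 mext ⟨(j₁ : ℕ), j₁.isLt, by
        rw [hmext]
        simp only [dif_pos j₁.isLt, Fin.eta]
        exact hj₁⟩
      have hTot : (∑ i, rkq K (fun μ : Fin (nn i) => evalL K σ hσ mext k (aa i) (β ⟨i, μ⟩)))
          + (∑ i, Module.finrank K ↥(LinearMap.ker (evalL K σ hσ mext k (aa i))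
              ⊓ Submodule.span K (Set.range fun μ : Fin (nn i) => β ⟨i, μ⟩))) = n := by
        rw [← Finset.sum_add_distrib, hn]
        exact Finset.sum_congr rfl fun i _ => key2 mext i
      -- lower bound on the kernel dimensions via the chosen positions
      have hfib : ∀ i : Fin ℓ, Fintype.card {r : Fin (k - 1) // (e r).1 = i}
          ≤ Module.finrank K ↥(LinearMap.ker (evalL K σ hσ mext k (aa i))
              ⊓ Submodule.span K (Set.range fun μ : Fin (nn i) => β ⟨i, μ⟩)) := by
        intro i
        set w : {r : Fin (k - 1) // (e r).1 = i} → Fin (nn i) :=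
          fun r => ⟨((e ↑r).2 : ℕ),
            lt_of_lt_of_le (e ↑r).2.isLt (le_of_eq (congrArg nn r.2))⟩ with hw
        have hsig : ∀ r : {r : Fin (k - 1) // (e r).1 = i},
            (⟨i, w r⟩ : Σ i : Fin ℓ, Fin (nn i)) = e ↑r :=
          fun r => sigma_eta (e ↑r) i r.2 (w r).isLt
        have hwinj : Function.Injective w := by
          intro r r' hww
          apply Subtype.ext
          apply e.injective
          calc e ↑r = ⟨i, w r⟩ := (hsig r).symm
            _ = ⟨i, w r'⟩ := by rw [hww]
            _ = e ↑r' := hsig r'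
        have hli : LinearIndependent K (fun r : {r : Fin (k - 1) // (e r).1 = i} =>
            β ⟨i, w r⟩) := (hβ i).comp w hwinj
        have hsle : Submodule.span K (Set.range
              (fun r : {r : Fin (k - 1) // (e r).1 = i} => β ⟨i, w r⟩))
            ≤ LinearMap.ker (evalL K σ hσ mext k (aa i))
              ⊓ Submodule.span K (Set.range fun μ : Fin (nn i) => β ⟨i, μ⟩) := by
          rw [Submodule.span_le]
          rintro _ ⟨r, rfl⟩
          refine Submodule.mem_inf.mpr ⟨?_, Submodule.subset_span ⟨w r, rfl⟩⟩
          show evalL K σ hσ mext k (aa i) (β ⟨i, w r⟩) = 0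
          rw [hsig r]
          have h3 := congrFun hΦ0 ↑r
          rw [show ((0 : Fin (k - 1) → F) ↑r) = 0 from rfl] at h3
          rw [hmext, evalL_fin σ hσ m0 (aa i) (β (e ↑r))]
          have h4 : aa i = aa (e ↑r).1 := by rw [r.2]
          rw [h4]
          exact h3
        calc Fintype.card {r : Fin (k - 1) // (e r).1 = i}
            = Module.finrank K ↥(Submodule.span K (Set.range
                (fun r : {r : Fin (k - 1) // (e r).1 = i} => β ⟨i, w r⟩))) :=
              (finrank_span_eq_card hli).symm
          _ ≤ _ := Submodule.finrank_mono hsle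
      have hfibsum : (∑ i, Fintype.card {r : Fin (k - 1) // (e r).1 = i}) = k - 1 := by
        have hco := Fintype.card_congr (Equiv.sigmaFiberEquiv (fun r : Fin (k - 1) => (e r).1))
        rw [Fintype.card_sigma, Fintype.card_fin] at hco
        exact hco
      have hKge : k - 1 ≤ ∑ i, Module.finrank K ↥(LinearMap.ker (evalL K σ hσ mext k (aa i))
          ⊓ Submodule.span K (Set.range fun μ : Fin (nn i) => β ⟨i, μ⟩)) := by
        rw [← hfibsum]
        exact Finset.sum_le_sum fun i _ => hfib i
      omega


end Stmt2
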